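/- Let H_1 (r_1×n_1) and H_2 (r_2×n_2) be matrices over F_2, and suppose there exist x̄ ∈ ker(H_1) nonzero with e_α ∉ Im(H_2^T) for some α, and symmetric conditions ensuring at least one nontrivial elementary canonical logical-Z operator exists (i.e., dim ker(H_1) · (n_2 − rank(H_2)) + (r_1 − rank(H_1)) · dim ker(H_2^T) > 0 appropriately interpreted). Then the minimum over all elementary canonical logical-Z operators L of Δ_{H_X}(L) equals min(Δ_{H_1}, Δ_{H_2^T}), where Δ_{H_1}, Δ_{H_2^T} are the minimum classical energy barriers over nonzero codewords of H_1 and H_2^T respectively, and H_X = (H_1 ⊗ I_{n_2} | I_{r_1} ⊗ H_2^T). -/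

import Mathlib

open Matrix Kronecker

/-- Hamming weight of a vector over `ZMod 2`. -/
def wt {α : Type*} [Fintype α] (v : α → ZMod 2) : ℕ :=
  (Finset.univ.filter fun i => v i ≠ 0).card

/-- Number of nonzero entries of a matrix over `ZMod 2`. -/
def mwt {α β : Type*} [Fintype α] [Fintype β] (M : Matrix α β (ZMod 2)) : ℕ :=
  (Finset.univ.filter fun p : α × β => M p.1 p.2 ≠ 0).card

/-- Energy barrier of a vector `s` w.r.t. parity check matrix `H`: the minimum over
single-bit-flip paths from `0` to `s` of the maximum energy `wt (H·v)` along the path. -/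
noncomputable def eb {α β : Type*} [Fintype α] [Fintype β] (H : Matrix α β (ZMod 2)) (s : β → ZMod 2) : ℕ :=
  sInf {B | ∃ F : ℕ, ∃ v : Fin (F + 1) → β → ZMod 2,
    v 0 = 0 ∧ v (Fin.last F) = s ∧
    (∀ i : Fin F, wt (v i.castSucc + v i.succ) ≤ 1) ∧
    ∀ i, wt (H.mulVec (v i)) ≤ B}

/-- Energy barrier of a classical code: minimum of `eb` over nonzero codewords. -/
noncomputable def codeEB {α β : Type*} [Fintype α] [Fintype β] (M : Matrix α β (ZMod 2)) : ℕ :=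
  sInf {E | ∃ c, c ≠ 0 ∧ M.mulVec c = 0 ∧ eb M c = E}

/-- The X-type parity check matrix of the hypergraph product code. -/
def HX {r1 n1 r2 n2 : ℕ} (H1 : Matrix (Fin r1) (Fin n1) (ZMod 2))
    (H2 : Matrix (Fin r2) (Fin n2) (ZMod 2)) :
    Matrix (Fin r1 × Fin n2) ((Fin n1 × Fin n2) ⊕ (Fin r1 × Fin r2)) (ZMod 2) :=
  Matrix.fromCols (H1 ⊗ₖ (1 : Matrix (Fin n2) (Fin n2) (ZMod 2)))
    ((1 : Matrix (Fin r1) (Fin r1) (ZMod 2)) ⊗ₖ H2ᵀ)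

/-! ### Auxiliary lemmas -/

lemma wt_eq_sum {α : Type*} [Fintype α] (v : α → ZMod 2) :
    wt v = ∑ i, if v i ≠ 0 then 1 else 0 := by
  rw [wt, Finset.card_filter]

lemma wt_le_card {α : Type*} [Fintype α] (v : α → ZMod 2) : wt v ≤ Fintype.card α :=
  le_trans (Finset.card_filter_le _ _) (le_of_eq (Finset.card_univ))

lemma wt_contract {ι κ σ : Type*} [Fintype ι] [Fintype κ] [Fintype σ]
    (f : κ → ZMod 2) (w : σ → ZMod 2) (e : ι → κ → σ)
    (he : Function.Injective (fun p : ι × κ => e p.1 p.2)) :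
    wt (fun j => ∑ γ, f γ * w (e j γ)) ≤ wt w := by
  classical
  rw [wt_eq_sum, wt_eq_sum]
  calc ∑ j, (if (∑ γ, f γ * w (e j γ)) ≠ 0 then 1 else 0)
      ≤ ∑ j, ∑ γ, if w (e j γ) ≠ 0 then 1 else 0 := by
        apply Finset.sum_le_sum; intro j _
        by_cases h : (∑ γ, f γ * w (e j γ)) ≠ 0
        · rw [if_pos h]
          obtain ⟨γ, hγ⟩ : ∃ γ, w (e j γ) ≠ 0 := by
            by_contra hc; push_neg at hc
            exact h (by simp [hc])
          calc (1:ℕ) = if w (e j γ) ≠ 0 then 1 else 0 := by rw [if_pos hγ]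
            _ ≤ _ := Finset.single_le_sum (f := fun γ => if w (e j γ) ≠ 0 then (1:ℕ) else 0) (fun _ _ => Nat.zero_le _) (Finset.mem_univ γ)
        · rw [if_neg h]; exact Nat.zero_le _
    _ = ∑ p : ι × κ, if w (e p.1 p.2) ≠ 0 then 1 else 0 := by
        rw [Fintype.sum_prod_type]
    _ = ∑ s ∈ Finset.univ.image (fun p : ι × κ => e p.1 p.2),
          if w s ≠ 0 then 1 else 0 := by
        rw [Finset.sum_image (fun a _ b _ hab => he hab)]
    _ ≤ ∑ s, if w s ≠ 0 then 1 else 0 :=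
        Finset.sum_le_sum_of_subset (Finset.subset_univ _)

lemma exists_ker_vec {m n : ℕ} (M : Matrix (Fin m) (Fin n) (ZMod 2)) (α : Fin m)
    (h : ¬ ∃ c, M.mulVec c = Pi.single α 1) :
    ∃ f : Fin m → ZMod 2, Mᵀ.mulVec f = 0 ∧ f α = 1 := by
  classical
  have hx : (Pi.single α 1 : Fin m → ZMod 2) ∉ LinearMap.range M.mulVecLin := by
    rintro ⟨c, hc⟩; exact h ⟨c, hc⟩
  obtain ⟨φ, hφ1, hφ2⟩ :=
    Submodule.exists_dual_map_eq_bot_of_notMem hx inferInstance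
  set f : Fin m → ZMod 2 := fun i => φ (Pi.single i 1) with hfdef
  have key : ∀ u : Fin m → ZMod 2, φ u = ∑ i, u i * f i := by
    intro u
    conv_lhs => rw [← Finset.univ_sum_single u]
    rw [map_sum]
    apply Finset.sum_congr rfl
    intro i _
    have : (Pi.single i (u i) : Fin m → ZMod 2) = u i • Pi.single i 1 := by
      rw [← Pi.single_smul, smul_eq_mul, mul_one]
    rw [this, φ.map_smul, smul_eq_mul]
  have hker : ∀ w ∈ LinearMap.range M.mulVecLin, φ w = 0 := by
    intro w hw
    have : φ w ∈ Submodule.map φ (LinearMap.range M.mulVecLin) :=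
      Submodule.mem_map_of_mem hw
    rw [hφ2] at this
    exact (Submodule.mem_bot _).mp this
  have one2 : ∀ a : ZMod 2, a ≠ 0 → a = 1 := by decide
  refine ⟨f, ?_, ?_⟩
  · funext k
    have h0 := hker (M.mulVec (Pi.single k 1)) ⟨Pi.single k 1, rfl⟩
    rw [key] at h0
    have : Mᵀ.mulVec f k = ∑ i, M.mulVec (Pi.single k 1) i * f i := by
      simp [mulVec, dotProduct, Pi.single_apply, mul_ite, ite_mul,
        Finset.sum_ite_eq', transpose_apply]
    rw [this, h0]; rfl
  · have h0 := key (Pi.single α 1)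
    have h1 : (∑ i, (Pi.single α 1 : Fin m → ZMod 2) i * f i) = f α := by
      simp [Pi.single_apply, ite_mul, Finset.sum_ite_eq']
    rw [h0, h1] at hφ1
    exact one2 _ hφ1

lemma path_exists {β : Type*} [Fintype β] (s : β → ZMod 2) :
    ∃ F : ℕ, ∃ v : Fin (F + 1) → β → ZMod 2,
      v 0 = 0 ∧ v (Fin.last F) = s ∧
      (∀ i : Fin F, wt (v i.castSucc + v i.succ) ≤ 1) := by
  classical
  set n := Fintype.card β with hn
  set e := Fintype.equivFin β with he
  refine ⟨n, fun i j => if (e j : ℕ) < (i : ℕ) then s j else 0, ?_, ?_, ?_⟩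
  · funext j; simp
  · funext j; have hlt := (e j).isLt; simp [Fin.last, (e j).isLt]; intro h; omega
  · intro i
    have hsub : (Finset.univ.filter fun j =>
        ((fun j => if (e j : ℕ) < ((i.castSucc : Fin (n+1)) : ℕ) then s j else 0) +
         (fun j => if (e j : ℕ) < ((i.succ : Fin (n+1)) : ℕ) then s j else 0)) j ≠ 0)
        ⊆ {e.symm ⟨i, i.isLt⟩} := by
      intro j hj
      simp only [Finset.mem_filter, Pi.add_apply] at hj
      simp only [Finset.mem_singleton]
      by_contra hne
      apply hj.2
      have hji : (e j : ℕ) ≠ (i : ℕ) := by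
        intro hc
        apply hne
        have : e j = ⟨i, i.isLt⟩ := Fin.ext hc
        rw [← this, Equiv.symm_apply_apply]
      have : ((e j : ℕ) < ((i.castSucc : Fin (n+1)) : ℕ)) ↔
          ((e j : ℕ) < ((i.succ : Fin (n+1)) : ℕ)) := by
        rw [Fin.coe_castSucc, Fin.val_succ]
        omega
      by_cases hlt : (e j : ℕ) < ((i.castSucc : Fin (n+1)) : ℕ)
      · rw [if_pos hlt, if_pos (this.mp hlt)]
        exact CharTwo.add_self_eq_zero _
      · rw [if_neg hlt, if_neg (fun hc => hlt (this.mpr hc)), add_zero]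
    calc wt _ ≤ ({e.symm ⟨i, i.isLt⟩} : Finset β).card := Finset.card_le_card hsub
      _ = 1 := Finset.card_singleton _

lemma eb_set_nonempty {α β : Type*} [Fintype α] [Fintype β] (H : Matrix α β (ZMod 2))
    (s : β → ZMod 2) :
    {B | ∃ F : ℕ, ∃ v : Fin (F + 1) → β → ZMod 2,
      v 0 = 0 ∧ v (Fin.last F) = s ∧
      (∀ i : Fin F, wt (v i.castSucc + v i.succ) ≤ 1) ∧
      ∀ i, wt (H.mulVec (v i)) ≤ B}.Nonempty := by
  obtain ⟨F, v, h0, hl, hs⟩ := path_exists s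
  exact ⟨Fintype.card α, F, v, h0, hl, hs, fun i => wt_le_card _⟩

lemma eb_le {α β : Type*} [Fintype α] [Fintype β] (H : Matrix α β (ZMod 2))
    (s : β → ZMod 2) {B : ℕ}
    (h : ∃ F : ℕ, ∃ v : Fin (F + 1) → β → ZMod 2,
      v 0 = 0 ∧ v (Fin.last F) = s ∧
      (∀ i : Fin F, wt (v i.castSucc + v i.succ) ≤ 1) ∧
      ∀ i, wt (H.mulVec (v i)) ≤ B) : eb H s ≤ B :=
  Nat.sInf_le h

lemma eb_spec {α β : Type*} [Fintype α] [Fintype β] (H : Matrix α β (ZMod 2))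
    (s : β → ZMod 2) :
    ∃ F : ℕ, ∃ v : Fin (F + 1) → β → ZMod 2,
      v 0 = 0 ∧ v (Fin.last F) = s ∧
      (∀ i : Fin F, wt (v i.castSucc + v i.succ) ≤ 1) ∧
      ∀ i, wt (H.mulVec (v i)) ≤ eb H s :=
  Nat.sInf_mem (eb_set_nonempty H s)

/-! ### Computation of `HX.mulVec` -/

lemma HX_mulVec_apply {r1 n1 r2 n2 : ℕ} (H1 : Matrix (Fin r1) (Fin n1) (ZMod 2))
    (H2 : Matrix (Fin r2) (Fin n2) (ZMod 2))
    (W : (Fin n1 × Fin n2) ⊕ (Fin r1 × Fin r2) → ZMod 2) (r : Fin r1) (γ : Fin n2) :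
    (HX H1 H2).mulVec W (r, γ) =
      (∑ j, H1 r j * W (Sum.inl (j, γ))) + ∑ c, H2 c γ * W (Sum.inr (r, c)) := by
  simp only [HX, mulVec, dotProduct, Fintype.sum_sum_type, fromCols,
    of_apply, Sum.elim_inl, Sum.elim_inr, Fintype.sum_prod_type,
    kroneckerMap_apply, Matrix.one_apply, transpose_apply,
    ite_mul, one_mul, zero_mul, mul_ite, mul_zero, mul_one]
  congr 1
  · apply Finset.sum_congr rfl; intro j _
    rw [Finset.sum_ite_eq]
    simp
  · rw [Finset.sum_comm]
    apply Finset.sum_congr rfl; intro c _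
    rw [Finset.sum_ite_eq]
    simp


/-! ### Weight of lifted vectors -/

lemma wt_elim_left {ι κ : Type*} [Fintype ι] [Fintype κ] (a : ι → ZMod 2) :
    wt (Sum.elim a (0 : κ → ZMod 2)) = wt a := by
  rw [wt_eq_sum, wt_eq_sum, Fintype.sum_sum_type]
  simp
  refine Finset.sum_congr rfl fun x _ => ?_
  split_ifs <;> simp_all

lemma wt_elim_right {ι κ : Type*} [Fintype ι] [Fintype κ] (a : κ → ZMod 2) :
    wt (Sum.elim (0 : ι → ZMod 2) a) = wt a := by
  rw [wt_eq_sum, wt_eq_sum, Fintype.sum_sum_type]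
  simp
  refine Finset.sum_congr rfl fun x _ => ?_
  split_ifs <;> simp_all

lemma wt_lift2' {ι κ : Type*} [Fintype ι] [Fintype κ] [DecidableEq κ]
    (u : ι → ZMod 2) (α : κ) :
    wt (fun p : ι × κ => if p.2 = α then u p.1 else 0) = wt u := by
  rw [wt_eq_sum, wt_eq_sum, Fintype.sum_prod_type]
  apply Finset.sum_congr rfl; intro i _
  have h : ∀ k : κ, (if (if k = α then u i else 0) ≠ 0 then (1:ℕ) else 0)
      = if k = α then (if u i ≠ 0 then 1 else 0) else 0 := by
    intro k; by_cases hk : k = α <;> simp [hk]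
  simp only [h, Finset.sum_ite_eq', Finset.mem_univ, if_pos]

lemma wt_lift1' {ι κ : Type*} [Fintype ι] [Fintype κ] [DecidableEq ι]
    (u : κ → ZMod 2) (β : ι) :
    wt (fun p : ι × κ => if p.1 = β then u p.2 else 0) = wt u := by
  rw [wt_eq_sum, wt_eq_sum, Fintype.sum_prod_type_right]
  apply Finset.sum_congr rfl; intro c _
  have h : ∀ k : ι, (if (if k = β then u c else 0) ≠ 0 then (1:ℕ) else 0)
      = if k = β then (if u c ≠ 0 then 1 else 0) else 0 := by
    intro k; by_cases hk : k = β <;> simp [hk]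
  simp only [h, Finset.sum_ite_eq', Finset.mem_univ, if_pos]

/-! ### The two lifting equalities -/

lemma eb_lift_left {r1 n1 r2 n2 : ℕ} (H1 : Matrix (Fin r1) (Fin n1) (ZMod 2))
    (H2 : Matrix (Fin r2) (Fin n2) (ZMod 2)) (x : Fin n1 → ZMod 2) (α : Fin n2)
    (hα : ¬ ∃ c, H2ᵀ.mulVec c = Pi.single α 1) :
    eb (HX H1 H2) (Sum.elim (fun p : Fin n1 × Fin n2 => if p.2 = α then x p.1 else 0)
      (0 : Fin r1 × Fin r2 → ZMod 2)) = eb H1 x := by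
  classical
  -- key formula for the mulVec of a lifted vector
  have hmul : ∀ u : Fin n1 → ZMod 2,
      (HX H1 H2).mulVec (Sum.elim (fun p : Fin n1 × Fin n2 => if p.2 = α then u p.1 else 0)
        (0 : Fin r1 × Fin r2 → ZMod 2))
      = fun q : Fin r1 × Fin n2 => if q.2 = α then H1.mulVec u q.1 else 0 := by
    intro u
    funext q
    obtain ⟨r, γ⟩ := q
    rw [HX_mulVec_apply]
    simp only [Sum.elim_inl, Sum.elim_inr, Pi.zero_apply, mul_zero,
      Finset.sum_const_zero, add_zero]
    by_cases hγ : γ = α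
    · subst hγ
      simp [mulVec, dotProduct]
    · simp only [hγ, if_false, mul_zero, Finset.sum_const_zero]
  apply le_antisymm
  · -- lifting upper bound
    obtain ⟨F, v, h0, hl, hflip, hE⟩ := eb_spec H1 x
    apply eb_le
    refine ⟨F, fun i => Sum.elim (fun p : Fin n1 × Fin n2 => if p.2 = α then v i p.1 else 0)
      (0 : Fin r1 × Fin r2 → ZMod 2), ?_, ?_, ?_, ?_⟩
    · funext q; obtain q | q := q <;> simp [h0]
    · funext q
      simp only [hl]
    · intro i
      have : (Sum.elim (fun p : Fin n1 × Fin n2 => if p.2 = α then v i.castSucc p.1 else 0)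
            (0 : Fin r1 × Fin r2 → ZMod 2))
          + (Sum.elim (fun p : Fin n1 × Fin n2 => if p.2 = α then v i.succ p.1 else 0)
            (0 : Fin r1 × Fin r2 → ZMod 2))
          = Sum.elim (fun p : Fin n1 × Fin n2 =>
              if p.2 = α then (v i.castSucc + v i.succ) p.1 else 0)
            (0 : Fin r1 × Fin r2 → ZMod 2) := by
        funext q; obtain q | q := q
        · simp only [Pi.add_apply, Sum.elim_inl]
          split <;> simp
        · simp
      rw [this, wt_elim_left, wt_lift2']
      exact hflip i
    · intro i
      rw [hmul, wt_lift2']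
      exact hE i
  · -- column-deformation lower bound
    obtain ⟨f, hf0, hfα⟩ := exists_ker_vec H2ᵀ α hα
    rw [transpose_transpose] at hf0
    obtain ⟨F, V, h0, hl, hflip, hE⟩ := eb_spec (HX H1 H2)
      (Sum.elim (fun p : Fin n1 × Fin n2 => if p.2 = α then x p.1 else 0)
        (0 : Fin r1 × Fin r2 → ZMod 2))
    apply eb_le
    refine ⟨F, fun i j => ∑ γ, f γ * V i (Sum.inl (j, γ)), ?_, ?_, ?_, ?_⟩
    · funext j; simp [h0]
    · funext j
      simp only [hl, Sum.elim_inl]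
      rw [Finset.sum_eq_single α]
      · rw [if_pos rfl, hfα, one_mul]
      · intro γ _ hγ; rw [if_neg hγ, mul_zero]
      · intro hc; exact absurd (Finset.mem_univ α) hc
    · intro i
      have : (fun j => ∑ γ, f γ * V i.castSucc (Sum.inl (j, γ)))
          + (fun j => ∑ γ, f γ * V i.succ (Sum.inl (j, γ)))
          = fun j => ∑ γ, f γ * (V i.castSucc + V i.succ) (Sum.inl (j, γ)) := by
        funext j
        rw [Pi.add_apply, ← Finset.sum_add_distrib]
        apply Finset.sum_congr rfl; intro γ _
        rw [Pi.add_apply]; ring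
      rw [this]
      calc wt _ ≤ wt (V i.castSucc + V i.succ) :=
            wt_contract f _ (fun j γ => Sum.inl (j, γ))
              (fun p q h => by
                simp only [Sum.inl.injEq, Prod.mk.injEq] at h
                exact Prod.ext h.1 h.2)
        _ ≤ 1 := hflip i
    · intro i
      have key : H1.mulVec (fun j => ∑ γ, f γ * V i (Sum.inl (j, γ)))
          = fun r => ∑ γ, f γ * (HX H1 H2).mulVec (V i) (r, γ) := by
        funext r
        have hr : ∀ γ, (HX H1 H2).mulVec (V i) (r, γ)
            = (∑ j, H1 r j * V i (Sum.inl (j, γ))) + ∑ c, H2 c γ * V i (Sum.inr (r, c)) :=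
          fun γ => HX_mulVec_apply H1 H2 (V i) r γ
        simp only [hr, mul_add, Finset.sum_add_distrib]
        have hz : (∑ γ, f γ * ∑ c, H2 c γ * V i (Sum.inr (r, c))) = 0 := by
          have : ∀ γ, f γ * ∑ c, H2 c γ * V i (Sum.inr (r, c))
              = ∑ c, f γ * (H2 c γ * V i (Sum.inr (r, c))) := fun γ => Finset.mul_sum _ _ _
          rw [Finset.sum_congr rfl (fun γ _ => this γ), Finset.sum_comm]
          apply Finset.sum_eq_zero; intro c _
          have : (∑ γ, f γ * (H2 c γ * V i (Sum.inr (r, c))))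
              = H2.mulVec f c * V i (Sum.inr (r, c)) := by
            rw [mulVec, dotProduct, Finset.sum_mul]
            apply Finset.sum_congr rfl; intro γ _; ring
          rw [this]
          have : H2.mulVec f c = 0 := by rw [hf0]; rfl
          rw [this, zero_mul]
        rw [hz, add_zero]
        rw [mulVec, dotProduct]
        have : ∀ γ, f γ * ∑ j, H1 r j * V i (Sum.inl (j, γ))
            = ∑ j, H1 r j * (f γ * V i (Sum.inl (j, γ))) := by
          intro γ
          rw [Finset.mul_sum]
          apply Finset.sum_congr rfl; intro j _; ring
        rw [Finset.sum_congr rfl (fun γ _ => this γ), Finset.sum_comm]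
        apply Finset.sum_congr rfl; intro j _
        rw [Finset.mul_sum]
      rw [key]
      calc wt _ ≤ wt ((HX H1 H2).mulVec (V i)) :=
            wt_contract f _ (fun r γ => (r, γ))
              (fun p q h => by
                simp only [Prod.mk.injEq] at h
                exact Prod.ext h.1 h.2)
        _ ≤ _ := hE i

lemma eb_lift_right {r1 n1 r2 n2 : ℕ} (H1 : Matrix (Fin r1) (Fin n1) (ZMod 2))
    (H2 : Matrix (Fin r2) (Fin n2) (ZMod 2)) (bb : Fin r2 → ZMod 2) (β : Fin r1)
    (hβ : ¬ ∃ c, H1.mulVec c = Pi.single β 1) :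
    eb (HX H1 H2) (Sum.elim (0 : Fin n1 × Fin n2 → ZMod 2)
      (fun p : Fin r1 × Fin r2 => if p.1 = β then bb p.2 else 0)) = eb H2ᵀ bb := by
  classical
  have hmul : ∀ u : Fin r2 → ZMod 2,
      (HX H1 H2).mulVec (Sum.elim (0 : Fin n1 × Fin n2 → ZMod 2)
        (fun p : Fin r1 × Fin r2 => if p.1 = β then u p.2 else 0))
      = fun q : Fin r1 × Fin n2 => if q.1 = β then H2ᵀ.mulVec u q.2 else 0 := by
    intro u
    funext q
    obtain ⟨r, γ⟩ := q
    rw [HX_mulVec_apply]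
    simp only [Sum.elim_inl, Sum.elim_inr, Pi.zero_apply, mul_zero,
      Finset.sum_const_zero, zero_add]
    by_cases hr : r = β
    · subst hr
      simp [mulVec, dotProduct, transpose_apply]
    · simp only [hr, if_false, mul_zero, Finset.sum_const_zero]
  apply le_antisymm
  · obtain ⟨F, v, h0, hl, hflip, hE⟩ := eb_spec H2ᵀ bb
    apply eb_le
    refine ⟨F, fun i => Sum.elim (0 : Fin n1 × Fin n2 → ZMod 2)
      (fun p : Fin r1 × Fin r2 => if p.1 = β then v i p.2 else 0), ?_, ?_, ?_, ?_⟩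
    · funext q; obtain q | q := q <;> simp [h0]
    · funext q
      simp only [hl]
    · intro i
      have : (Sum.elim (0 : Fin n1 × Fin n2 → ZMod 2)
            (fun p : Fin r1 × Fin r2 => if p.1 = β then v i.castSucc p.2 else 0))
          + (Sum.elim (0 : Fin n1 × Fin n2 → ZMod 2)
            (fun p : Fin r1 × Fin r2 => if p.1 = β then v i.succ p.2 else 0))
          = Sum.elim (0 : Fin n1 × Fin n2 → ZMod 2)
            (fun p : Fin r1 × Fin r2 =>
              if p.1 = β then (v i.castSucc + v i.succ) p.2 else 0) := by
        funext q; obtain q | q := q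
        · simp
        · simp only [Pi.add_apply, Sum.elim_inr]
          split <;> simp
      rw [this, wt_elim_right, wt_lift1']
      exact hflip i
    · intro i
      rw [hmul, wt_lift1']
      exact hE i
  · obtain ⟨g, hg0, hgβ⟩ := exists_ker_vec H1 β hβ
    obtain ⟨F, V, h0, hl, hflip, hE⟩ := eb_spec (HX H1 H2)
      (Sum.elim (0 : Fin n1 × Fin n2 → ZMod 2)
        (fun p : Fin r1 × Fin r2 => if p.1 = β then bb p.2 else 0))
    apply eb_le
    refine ⟨F, fun i c => ∑ b, g b * V i (Sum.inr (b, c)), ?_, ?_, ?_, ?_⟩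
    · funext c; simp [h0]
    · funext c
      simp only [hl, Sum.elim_inr]
      rw [Finset.sum_eq_single β]
      · rw [if_pos rfl, hgβ, one_mul]
      · intro b _ hb; rw [if_neg hb, mul_zero]
      · intro hc; exact absurd (Finset.mem_univ β) hc
    · intro i
      have : (fun c => ∑ b, g b * V i.castSucc (Sum.inr (b, c)))
          + (fun c => ∑ b, g b * V i.succ (Sum.inr (b, c)))
          = fun c => ∑ b, g b * (V i.castSucc + V i.succ) (Sum.inr (b, c)) := by
        funext c
        rw [Pi.add_apply, ← Finset.sum_add_distrib]
        apply Finset.sum_congr rfl; intro b _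
        rw [Pi.add_apply]; ring
      rw [this]
      calc wt _ ≤ wt (V i.castSucc + V i.succ) :=
            wt_contract g _ (fun c b => Sum.inr (b, c))
              (fun p q h => by
                simp only [Sum.inr.injEq, Prod.mk.injEq] at h
                exact Prod.ext h.2 h.1)
        _ ≤ 1 := hflip i
    · intro i
      have key : H2ᵀ.mulVec (fun c => ∑ b, g b * V i (Sum.inr (b, c)))
          = fun γ => ∑ b, g b * (HX H1 H2).mulVec (V i) (b, γ) := by
        funext γ
        have hr : ∀ b, (HX H1 H2).mulVec (V i) (b, γ)
            = (∑ j, H1 b j * V i (Sum.inl (j, γ))) + ∑ c, H2 c γ * V i (Sum.inr (b, c)) :=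
          fun b => HX_mulVec_apply H1 H2 (V i) b γ
        simp only [hr, mul_add, Finset.sum_add_distrib]
        have hz : (∑ b, g b * ∑ j, H1 b j * V i (Sum.inl (j, γ))) = 0 := by
          have : ∀ b, g b * ∑ j, H1 b j * V i (Sum.inl (j, γ))
              = ∑ j, g b * (H1 b j * V i (Sum.inl (j, γ))) := fun b => Finset.mul_sum _ _ _
          rw [Finset.sum_congr rfl (fun b _ => this b), Finset.sum_comm]
          apply Finset.sum_eq_zero; intro j _
          have : (∑ b, g b * (H1 b j * V i (Sum.inl (j, γ))))
              = H1ᵀ.mulVec g j * V i (Sum.inl (j, γ)) := by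
            rw [mulVec, dotProduct, Finset.sum_mul]
            apply Finset.sum_congr rfl; intro b _
            rw [transpose_apply]; ring
          rw [this]
          have : H1ᵀ.mulVec g j = 0 := by rw [hg0]; rfl
          rw [this, zero_mul]
        rw [hz, zero_add]
        rw [mulVec, dotProduct]
        have : ∀ b, g b * ∑ c, H2 c γ * V i (Sum.inr (b, c))
            = ∑ c, H2ᵀ γ c * (g b * V i (Sum.inr (b, c))) := by
          intro b
          rw [Finset.mul_sum]
          apply Finset.sum_congr rfl; intro c _
          rw [transpose_apply]; ring
        rw [Finset.sum_congr rfl (fun b _ => this b), Finset.sum_comm]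
        apply Finset.sum_congr rfl; intro c _
        rw [Finset.mul_sum]
      rw [key]
      calc wt _ ≤ wt ((HX H1 H2).mulVec (V i)) :=
            wt_contract g _ (fun γ b => (b, γ))
              (fun p q h => by
                simp only [Prod.mk.injEq] at h
                exact Prod.ext h.2 h.1)
        _ ≤ _ := hE i

theorem stmt19 {r1 n1 r2 n2 : ℕ}
    (H1 : Matrix (Fin r1) (Fin n1) (ZMod 2)) (H2 : Matrix (Fin r2) (Fin n2) (ZMod 2))
    (h1 : ∃ (x : Fin n1 → ZMod 2) (α : Fin n2), x ≠ 0 ∧ H1.mulVec x = 0 ∧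
        ¬ ∃ c, H2ᵀ.mulVec c = Pi.single α 1)
    (h2 : ∃ (bb : Fin r2 → ZMod 2) (β : Fin r1), bb ≠ 0 ∧ H2ᵀ.mulVec bb = 0 ∧
        ¬ ∃ c, H1.mulVec c = Pi.single β 1) :
    sInf {E | ∃ L : (Fin n1 × Fin n2) ⊕ (Fin r1 × Fin r2) → ZMod 2,
      ((∃ (x : Fin n1 → ZMod 2) (α : Fin n2), x ≠ 0 ∧ H1.mulVec x = 0 ∧
          (¬ ∃ c, H2ᵀ.mulVec c = Pi.single α 1) ∧
          L = Sum.elim (fun p : Fin n1 × Fin n2 => if p.2 = α then x p.1 else 0)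
                (0 : Fin r1 × Fin r2 → ZMod 2)) ∨
       (∃ (bb : Fin r2 → ZMod 2) (β : Fin r1), bb ≠ 0 ∧ H2ᵀ.mulVec bb = 0 ∧
          (¬ ∃ c, H1.mulVec c = Pi.single β 1) ∧
          L = Sum.elim (0 : Fin n1 × Fin n2 → ZMod 2)
                (fun p : Fin r1 × Fin r2 => if p.1 = β then bb p.2 else 0))) ∧
      eb (HX H1 H2) L = E} = min (codeEB H1) (codeEB H2ᵀ) := by
  obtain ⟨x0, α0, hx0, hx0ker, hα0⟩ := h1
  obtain ⟨b0, β0, hb0, hb0ker, hβ0⟩ := h2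
  set S := {E | ∃ L : (Fin n1 × Fin n2) ⊕ (Fin r1 × Fin r2) → ZMod 2,
      ((∃ (x : Fin n1 → ZMod 2) (α : Fin n2), x ≠ 0 ∧ H1.mulVec x = 0 ∧
          (¬ ∃ c, H2ᵀ.mulVec c = Pi.single α 1) ∧
          L = Sum.elim (fun p : Fin n1 × Fin n2 => if p.2 = α then x p.1 else 0)
                (0 : Fin r1 × Fin r2 → ZMod 2)) ∨
       (∃ (bb : Fin r2 → ZMod 2) (β : Fin r1), bb ≠ 0 ∧ H2ᵀ.mulVec bb = 0 ∧
          (¬ ∃ c, H1.mulVec c = Pi.single β 1) ∧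
          L = Sum.elim (0 : Fin n1 × Fin n2 → ZMod 2)
                (fun p : Fin r1 × Fin r2 => if p.1 = β then bb p.2 else 0))) ∧
      eb (HX H1 H2) L = E} with hS
  -- every element of S is ≥ min
  have hlb : ∀ E ∈ S, min (codeEB H1) (codeEB H2ᵀ) ≤ E := by
    rintro E ⟨L, hL | hL, hEeq⟩
    · obtain ⟨x, α, hx, hker, hα, hLdef⟩ := hL
      have : eb (HX H1 H2) L = eb H1 x := by rw [hLdef]; exact eb_lift_left H1 H2 x α hα
      have hmem : codeEB H1 ≤ eb H1 x := Nat.sInf_le ⟨x, hx, hker, rfl⟩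
      calc min (codeEB H1) (codeEB H2ᵀ) ≤ codeEB H1 := min_le_left _ _
        _ ≤ eb H1 x := hmem
        _ = E := by rw [← this, hEeq]
    · obtain ⟨bb, β, hbb, hker, hβ, hLdef⟩ := hL
      have : eb (HX H1 H2) L = eb H2ᵀ bb := by rw [hLdef]; exact eb_lift_right H1 H2 bb β hβ
      have hmem : codeEB H2ᵀ ≤ eb H2ᵀ bb := Nat.sInf_le ⟨bb, hbb, hker, rfl⟩
      calc min (codeEB H1) (codeEB H2ᵀ) ≤ codeEB H2ᵀ := min_le_right _ _
        _ ≤ eb H2ᵀ bb := hmem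
        _ = E := by rw [← this, hEeq]
  -- codeEB H1 ∈ S
  have hmem1 : codeEB H1 ∈ S := by
    obtain ⟨c, hc, hcker, hceb⟩ :=
      Nat.sInf_mem (s := {E | ∃ c, c ≠ 0 ∧ H1.mulVec c = 0 ∧ eb H1 c = E})
        ⟨eb H1 x0, x0, hx0, hx0ker, rfl⟩
    exact ⟨Sum.elim (fun p : Fin n1 × Fin n2 => if p.2 = α0 then c p.1 else 0)
        (0 : Fin r1 × Fin r2 → ZMod 2),
      Or.inl ⟨c, α0, hc, hcker, hα0, rfl⟩,
      by rw [eb_lift_left H1 H2 c α0 hα0]; exact hceb⟩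
  have hmem2 : codeEB H2ᵀ ∈ S := by
    obtain ⟨c, hc, hcker, hceb⟩ :=
      Nat.sInf_mem (s := {E | ∃ c, c ≠ 0 ∧ H2ᵀ.mulVec c = 0 ∧ eb H2ᵀ c = E})
        ⟨eb H2ᵀ b0, b0, hb0, hb0ker, rfl⟩
    exact ⟨Sum.elim (0 : Fin n1 × Fin n2 → ZMod 2)
        (fun p : Fin r1 × Fin r2 => if p.1 = β0 then c p.2 else 0),
      Or.inr ⟨c, β0, hc, hcker, hβ0, rfl⟩,
      by rw [eb_lift_right H1 H2 c β0 hβ0]; exact hceb⟩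
  apply le_antisymm
  · exact le_min (Nat.sInf_le hmem1) (Nat.sInf_le hmem2)
  · exact le_csInf ⟨_, hmem1⟩ hlb
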